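/- Let S be a multiplicatively closed subset of R with S ∩ Z(R) = ∅ (S contains no zerodivisors). If I is a weakly semiprimary ideal of R with S ∩ √I = ∅, then the localization I_S is a weakly semiprimary ideal of R_S. -/

import Mathlib

variable {R : Type*}

/-- δ is an expansion function of ideals: L ⊆ δ(L) always, and J ⊆ I implies δ(J) ⊆ δ(I). -/
def IsExpansionFunction [CommRing R] (δ : Ideal R → Ideal R) : Prop :=
  (∀ L : Ideal R, L ≤ δ L) ∧ ∀ I J : Ideal R, J ≤ I → δ J ≤ δ I

/-- I is a weakly δ-semiprimary ideal: I is proper and 0 ≠ ab ∈ I implies a ∈ δ(I) or b ∈ δ(I). -/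
def IsWeaklyDeltaSemiprimary [CommRing R] (δ : Ideal R → Ideal R) (I : Ideal R) : Prop :=
  I ≠ ⊤ ∧ ∀ a b : R, a * b ≠ 0 → a * b ∈ I → a ∈ δ I ∨ b ∈ δ I

/-- I is a δ-semiprimary ideal: I is proper and ab ∈ I implies a ∈ δ(I) or b ∈ δ(I). -/
def IsDeltaSemiprimary [CommRing R] (δ : Ideal R → Ideal R) (I : Ideal R) : Prop :=
  I ≠ ⊤ ∧ ∀ a b : R, a * b ∈ I → a ∈ δ I ∨ b ∈ δ I

/-- I is weakly semiprimary: I is proper and 0 ≠ ab ∈ I implies a ∈ √I or b ∈ √I. -/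
def IsWeaklySemiprimary [CommRing R] (I : Ideal R) : Prop :=
  I ≠ ⊤ ∧ ∀ a b : R, a * b ≠ 0 → a * b ∈ I → a ∈ I.radical ∨ b ∈ I.radical

/-- I is semiprimary: I is proper and ab ∈ I implies a ∈ √I or b ∈ √I. -/
def IsSemiprimary [CommRing R] (I : Ideal R) : Prop :=
  I ≠ ⊤ ∧ ∀ a b : R, a * b ∈ I → a ∈ I.radical ∨ b ∈ I.radical

/-- P is weakly prime: P is proper and 0 ≠ ab ∈ P implies a ∈ P or b ∈ P. -/
def IsWeaklyPrimeIdeal [CommRing R] (P : Ideal R) : Prop :=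
  P ≠ ⊤ ∧ ∀ a b : R, a * b ≠ 0 → a * b ∈ P → a ∈ P ∨ b ∈ P

theorem stmt_15 [CommRing R] [Nontrivial R] (M : Submonoid R)
    (hM : ∀ s ∈ M, s ∈ nonZeroDivisors R)
    (I : Ideal R) (hI : IsWeaklySemiprimary I)
    (hMI : ∀ s ∈ M, s ∉ I.radical) :
    IsWeaklySemiprimary (I.map (algebraMap R (Localization M))) := by
  set S := Localization M
  have hMle : M ≤ nonZeroDivisors R := fun s hs => hM s hs
  have hinj : Function.Injective (algebraMap R S) := IsLocalization.injective S hMle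
  set J := I.map (algebraMap R S) with hJ
  -- radical membership transfer
  have hrad : ∀ r : R, r ∈ I.radical → algebraMap R S r ∈ J.radical := by
    intro r ⟨n, hn⟩
    exact ⟨n, by rw [← map_pow]; exact Ideal.mem_map_of_mem _ hn⟩
  constructor
  · intro htop
    have h1 : (1 : S) ∈ J := htop ▸ Submodule.mem_top
    rw [hJ, IsLocalization.mem_map_algebraMap_iff M] at h1
    obtain ⟨⟨x, m⟩, hx⟩ := h1
    rw [one_mul] at hx
    have : (m : R) = (x : R) := hinj hx
    exact hMI m m.2 (Ideal.le_radical (this ▸ x.2))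
  · intro a b hab habJ
    obtain ⟨⟨r, s⟩, (hr : IsLocalization.mk' S r s = a)⟩ := IsLocalization.mk'_surjective M a
    obtain ⟨⟨r', s'⟩, (hr' : IsLocalization.mk' S r' s' = b)⟩ := IsLocalization.mk'_surjective M b
    have habmk : IsLocalization.mk' S (r * r') (s * s') = a * b := by
      rw [IsLocalization.mk'_mul, hr, hr']
    rw [← habmk, IsLocalization.mk'_mem_map_algebraMap_iff M] at habJ
    obtain ⟨t, htM, htI⟩ := habJ
    have hne : (t * r) * r' ≠ 0 := by
      intro h0
      have hrr' : r * r' = 0 := (mem_nonZeroDivisors_iff.mp (hM t htM)).2 (r * r') (by rw [mul_comm]; rwa [mul_assoc] at h0)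
      apply hab
      rw [← habmk, hrr']
      exact IsLocalization.mk'_zero _
    have := hI.2 (t * r) r' hne (by rw [mul_assoc]; exact htI)
    rcases this with h | h
    · left
      obtain ⟨n, hn⟩ := h
      have : (algebraMap R S (t * r)) ^ n ∈ J := by
        rw [← map_pow]; exact Ideal.mem_map_of_mem _ hn
      rw [map_mul, mul_pow] at this
      have hu : IsUnit ((algebraMap R S t) ^ n) :=
        (IsLocalization.map_units S ⟨t, htM⟩).pow n
      have hrn : (algebraMap R S r) ^ n ∈ J :=
        (Ideal.unit_mul_mem_iff_mem J hu).mp this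
      have : algebraMap R S r ∈ J.radical := ⟨n, hrn⟩
      rw [← hr, IsLocalization.mk'_eq_mul_mk'_one]
      exact Ideal.mul_mem_right _ _ this
    · right
      have : algebraMap R S r' ∈ J.radical := hrad r' h
      rw [← hr', IsLocalization.mk'_eq_mul_mk'_one]
      exact Ideal.mul_mem_right _ _ this
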